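/- Let H be a separable infinite-dimensional complex Hilbert space and let {f_n}_{n=0}^∞ be a sequence in H. If the image of the analysis operator of {f_n}, i.e. the set { {⟨f, f_n⟩}_{n=0}^∞ : f ∈ H and {⟨f, f_n⟩}_n ∈ ℓ²(ℕ) } ⊆ ℓ²(ℕ), contains an infinite-dimensional closed subspace of ℓ²(ℕ), then there exist an infinite-dimensional linear subspace D ⊆ H and a constant A > 0 such that A‖f‖² ≤ ∑_{n=0}^∞ |⟨f, f_n⟩|² < ∞ for every f ∈ D. -/

import Mathlib

open scoped ComplexInnerProductSpace

noncomputable section Stmt1Aux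

namespace Stmt1Aux

variable {H : Type*} [NormedAddCommGroup H] [InnerProductSpace ℂ H] [CompleteSpace H]

local notation "ℓ2" => lp (fun _ : ℕ => ℂ) 2

/-- closure of span of the range of the sequence, as `Uᗮᗮ`. -/
def W (fseq : ℕ → H) : Submodule ℂ H := ((Submodule.span ℂ (Set.range fseq))ᗮ)ᗮ

lemma mem_orthospan {fseq : ℕ → H} {f : H} (hf : ∀ n, ⟪f, fseq n⟫ = 0) :
    f ∈ (Submodule.span ℂ (Set.range fseq))ᗮ := by
  rw [Submodule.mem_orthogonal]
  intro u hu
  induction hu using Submodule.span_induction with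
  | mem x hx =>
      obtain ⟨n, rfl⟩ := hx
      rw [← inner_conj_symm, hf n, map_zero]
  | zero => simp
  | add x y _ _ hx hy => rw [inner_add_left, hx, hy, add_zero]
  | smul z x _ hx => rw [inner_smul_left, hx, mul_zero]


set_option linter.unusedSectionVars false
set_option maxHeartbeats 1000000
set_option synthInstance.maxHeartbeats 400000

lemma inner_eq_zero_of_mem_ortho {fseq : ℕ → H} {k : H}
    (hk : k ∈ (Submodule.span ℂ (Set.range fseq))ᗮ) (n : ℕ) : ⟪k, fseq n⟫ = 0 := by
  rw [← inner_conj_symm]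
  rw [Submodule.mem_orthogonal] at hk
  rw [hk (fseq n) (Submodule.subset_span ⟨n, rfl⟩), map_zero]

variable (fseq : ℕ → H) (S : Submodule ℂ ℓ2)

/-- The (real-linear) graph of the analysis operator restricted over `S` and `W`. -/
def G : Submodule ℝ (H × ℓ2) where
  carrier := {p | p.1 ∈ W fseq ∧ p.2 ∈ S ∧ ∀ n, (p.2 : ∀ _ : ℕ, ℂ) n = ⟪p.1, fseq n⟫}
  zero_mem' := by
    refine ⟨(W fseq).zero_mem, S.zero_mem, fun n => ?_⟩
    simp [lp.coeFn_zero]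
  add_mem' := by
    rintro p q ⟨hp1, hp2, hp3⟩ ⟨hq1, hq2, hq3⟩
    refine ⟨(W fseq).add_mem hp1 hq1, S.add_mem hp2 hq2, fun n => ?_⟩
    have : ((p.2 + q.2 : ℓ2) : ∀ _ : ℕ, ℂ) n = (p.2 : ∀ _ : ℕ, ℂ) n + (q.2 : ∀ _ : ℕ, ℂ) n := by
      rw [lp.coeFn_add]; rfl
    rw [Prod.fst_add, Prod.snd_add, this, hp3 n, hq3 n, inner_add_left]
  smul_mem' := by
    rintro r p ⟨hp1, hp2, hp3⟩
    have h1 : (r • p).1 = (r : ℂ) • p.1 := by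
      rw [Prod.smul_fst, Complex.coe_smul]
    have h2 : (r • p).2 = (r : ℂ) • p.2 := by
      rw [Prod.smul_snd, Complex.coe_smul]; rfl
    refine ⟨?_, ?_, fun n => ?_⟩
    · rw [h1]; exact (W fseq).smul_mem _ hp1
    · rw [h2]; exact S.smul_mem _ hp2
    · have : (((r • p).2 : ℓ2) : ∀ _ : ℕ, ℂ) n = (r : ℂ) * (p.2 : ∀ _ : ℕ, ℂ) n := by
        rw [h2, lp.coeFn_smul]; rfl
      rw [this, hp3 n, h1, inner_smul_left, Complex.conj_ofReal]

lemma isClosed_G (hS : IsClosed (S : Set ℓ2)) : IsClosed ((G fseq S : Set (H × ℓ2))) := by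
  have h1 : IsClosed {p : H × ℓ2 | p.1 ∈ W fseq} :=
    (Submodule.isClosed_orthogonal _).preimage continuous_fst
  have h2 : IsClosed {p : H × ℓ2 | p.2 ∈ S} := hS.preimage continuous_snd
  have h3 : ∀ n : ℕ, IsClosed {p : H × ℓ2 | (p.2 : ∀ _ : ℕ, ℂ) n = ⟪p.1, fseq n⟫} := by
    intro n
    apply isClosed_eq
    · have hev : Continuous fun c : ℓ2 => (c : ∀ _ : ℕ, ℂ) n := by
        have : LipschitzWith 1 fun c : ℓ2 => (c : ∀ _ : ℕ, ℂ) n := by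
          apply LipschitzWith.of_dist_le_mul
          intro a b
          have := lp.norm_apply_le_norm (by norm_num : (2 : ENNReal) ≠ 0) (a - b) n
          simpa [dist_eq_norm, lp.coeFn_sub] using this
        exact this.continuous
      exact hev.comp continuous_snd
    · exact continuous_fst.inner continuous_const
  have heq : (G fseq S : Set (H × ℓ2)) =
      {p : H × ℓ2 | p.1 ∈ W fseq} ∩
        ({p | p.2 ∈ S} ∩ ⋂ n, {p | (p.2 : ∀ _ : ℕ, ℂ) n = ⟪p.1, fseq n⟫}) := by
    ext p
    simp only [Set.mem_inter_iff, Set.mem_iInter, Set.mem_setOf_eq, SetLike.mem_coe]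
    exact ⟨fun ⟨a, b, c⟩ => ⟨a, b, c⟩, fun ⟨a, b, c⟩ => ⟨a, b, c⟩⟩
  rw [heq]
  exact h1.inter (h2.inter (isClosed_iInter h3))


/-- The second projection from the graph to `S`. -/
def piSnd : ↥(G fseq S) →L[ℝ] ↥S :=
  LinearMap.mkContinuous
    { toFun := fun p => ⟨p.val.2, p.2.2.1⟩
      map_add' := fun p q => rfl
      map_smul' := fun r p => rfl }
    1 (fun p => by simpa using norm_snd_le p.val)

lemma piSnd_ker : (piSnd fseq S).ker = ⊥ := by
  rw [LinearMap.ker_eq_bot]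
  intro p q h
  have h2 : p.val.2 = q.val.2 := congrArg Subtype.val h
  have h1 : p.val.1 = q.val.1 := by
    have hp := p.2
    have hq := q.2
    have hd : ∀ n, ⟪p.val.1 - q.val.1, fseq n⟫ = 0 := by
      intro n
      rw [inner_sub_left, ← hp.2.2 n, ← hq.2.2 n, h2, sub_self]
    have hmem : p.val.1 - q.val.1 ∈ (Submodule.span ℂ (Set.range fseq))ᗮ :=
      mem_orthospan hd
    have hmem2 : p.val.1 - q.val.1 ∈ W fseq := (W fseq).sub_mem hp.1 hq.1
    have := (Submodule.orthogonal_disjoint (Submodule.span ℂ (Set.range fseq))ᗮ)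
    have h0 : p.val.1 - q.val.1 = 0 := by
      exact (Submodule.disjoint_def.mp this) _ hmem hmem2
    exact sub_eq_zero.mp h0
  exact Subtype.ext (Prod.ext h1 h2)

lemma piSnd_range
    (hSim : ∀ c ∈ S, ∃ f : H, ∀ n : ℕ, (c : ∀ _ : ℕ, ℂ) n = ⟪f, fseq n⟫) :
    (piSnd fseq S).range = ⊤ := by
  rw [LinearMap.range_eq_top]

  intro c
  obtain ⟨f, hf⟩ := hSim c.val c.2
  set K : Submodule ℂ H := (Submodule.span ℂ (Set.range fseq))ᗮ
  haveI : CompleteSpace ↥K := (Submodule.isClosed_orthogonal _).completeSpace_coe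
  haveI : K.HasOrthogonalProjection := Submodule.HasOrthogonalProjection.ofCompleteSpace K
  set g : H := f - (Submodule.orthogonalProjection K f : H) with hg
  have hgW : g ∈ W fseq := Submodule.sub_starProjection_mem_orthogonal (K := K) f
  have hginner : ∀ n, ⟪g, fseq n⟫ = ⟪f, fseq n⟫ := by
    intro n
    rw [hg, inner_sub_left,
      inner_eq_zero_of_mem_ortho (Submodule.orthogonalProjection K f).2 n, sub_zero]
  have hmem : (g, c.val) ∈ G fseq S := by
    refine ⟨hgW, c.2, fun n => ?_⟩
    rw [hf n, hginner n]
  exact ⟨⟨(g, c.val), hmem⟩, Subtype.ext rfl⟩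

/-- The subspace `D ⊆ H`. -/
def D : Submodule ℂ H where
  carrier := {f | ∃ c : ℓ2, (f, c) ∈ G fseq S}
  zero_mem' := ⟨0, (G fseq S).zero_mem⟩
  add_mem' := by
    rintro a b ⟨c, hc⟩ ⟨d, hd⟩
    exact ⟨c + d, (G fseq S).add_mem hc hd⟩
  smul_mem' := by
    rintro z f ⟨c, ⟨h1, h2, h3⟩⟩
    refine ⟨(starRingEnd ℂ) z • c, (W fseq).smul_mem _ h1, S.smul_mem _ h2, fun n => ?_⟩
    have : (((starRingEnd ℂ) z • c : ℓ2) : ∀ _ : ℕ, ℂ) n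
        = (starRingEnd ℂ) z * (c : ∀ _ : ℕ, ℂ) n := by
      rw [lp.coeFn_smul]; rfl
    rw [this, h3 n, ← inner_smul_left]

lemma notFD_D (hSfd : ¬ FiniteDimensional ℂ ↥S)
    (hSim : ∀ c ∈ S, ∃ f : H, ∀ n : ℕ, (c : ∀ _ : ℕ, ℂ) n = ⟪f, fseq n⟫) :
    ¬ FiniteDimensional ℂ ↥(D fseq S) := by
  intro hfd
  haveI : FiniteDimensional ℝ ↥(D fseq S) := FiniteDimensional.trans ℝ ℂ _
  let φ : ↥(G fseq S) →ₗ[ℝ] ↥(D fseq S) :=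
    { toFun := fun p => ⟨p.val.1, ⟨p.val.2, p.2⟩⟩
      map_add' := fun p q => rfl
      map_smul' := fun r p => rfl }
  have hφ : Function.Injective φ := by
    intro p q h
    have h1 : p.val.1 = q.val.1 := congrArg Subtype.val h
    have h2 : p.val.2 = q.val.2 := by
      apply lp.ext
      funext n
      rw [p.2.2.2 n, q.2.2.2 n, h1]
    exact Subtype.ext (Prod.ext h1 h2)
  haveI : FiniteDimensional ℝ ↥(G fseq S) := FiniteDimensional.of_injective φ hφ
  have hsurj : Function.Surjective (piSnd fseq S) := by
    rw [← ContinuousLinearMap.coe_coe, ← LinearMap.range_eq_top]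
    exact piSnd_range fseq S hSim
  haveI : FiniteDimensional ℝ ↥S :=
    FiniteDimensional.of_surjective ((piSnd fseq S) : ↥(G fseq S) →ₗ[ℝ] ↥S)
      (fun y => hsurj y)
  exact hSfd (Module.Finite.of_restrictScalars_finite ℝ ℂ ↥S)

end Stmt1Aux

end Stmt1Aux


open Stmt1Aux in
/-- If the image of the analysis operator of `{f_n}` contains an
infinite-dimensional closed subspace of `ℓ²(ℕ)`, then there exist an infinite-dimensional
subspace `D ⊆ H` and `A > 0` with `A‖f‖² ≤ ∑ |⟨f, f_n⟩|² < ∞` for all `f ∈ D`. -/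
theorem stmt1 {H : Type*} [NormedAddCommGroup H] [InnerProductSpace ℂ H]
    [CompleteSpace H] [TopologicalSpace.SeparableSpace H]
    (hH : ¬ FiniteDimensional ℂ H) (fseq : ℕ → H)
    (hIm : ∃ S : Submodule ℂ (lp (fun _ : ℕ => ℂ) 2),
      IsClosed (S : Set (lp (fun _ : ℕ => ℂ) 2)) ∧ ¬ FiniteDimensional ℂ S ∧
      ∀ c ∈ S, ∃ f : H, ∀ n : ℕ, (c : ∀ _ : ℕ, ℂ) n = ⟪f, fseq n⟫) :
    ∃ D : Submodule ℂ H, ¬ FiniteDimensional ℂ D ∧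
      ∃ A : ℝ, 0 < A ∧ ∀ f ∈ D,
        Summable (fun n => ‖⟪f, fseq n⟫‖ ^ 2) ∧
        A * ‖f‖ ^ 2 ≤ ∑' n, ‖⟪f, fseq n⟫‖ ^ 2 := by
  obtain ⟨S, hScl, hSfd, hSim⟩ := hIm
  refine ⟨D fseq S, notFD_D fseq S hSfd hSim, ?_⟩
  haveI : CompleteSpace ↥(G fseq S) := (isClosed_G fseq S hScl).completeSpace_coe
  haveI : CompleteSpace ↥S := hScl.completeSpace_coe
  set e := ContinuousLinearEquiv.ofBijective (piSnd fseq S) (piSnd_ker fseq S)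
    (piSnd_range fseq S hSim) with he
  set C : ℝ := ‖(e.symm : ↥S →L[ℝ] ↥(G fseq S))‖ + 1 with hCdef
  have hC0 : 0 < C := by positivity
  refine ⟨(C ^ 2)⁻¹, by positivity, ?_⟩
  intro f hf
  obtain ⟨c, hc⟩ := hf
  have hcoord : ∀ n, ⟪f, fseq n⟫ = (c : ∀ _ : ℕ, ℂ) n := fun n => (hc.2.2 n).symm
  have hsum : Summable fun n => ‖(c : ∀ _ : ℕ, ℂ) n‖ ^ 2 := by
    have h := (memℓp_gen_iff (p := 2) (by norm_num)).mp (lp.memℓp c)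
    refine Summable.congr h (fun n => ?_)
    rw [show ((2:ENNReal).toReal) = ((2:ℕ):ℝ) by norm_num, Real.rpow_natCast]
  have hts : ∑' n, ‖(c : ∀ _ : ℕ, ℂ) n‖ ^ 2 = ‖c‖ ^ 2 := by
    have h := lp.norm_rpow_eq_tsum (p := 2) (by norm_num) c
    rw [show ((2:ENNReal).toReal) = ((2:ℕ):ℝ) by norm_num] at h
    simp only [Real.rpow_natCast] at h
    rw [← h]
  have hfp : ‖f‖ ≤ C * ‖c‖ := by
    set p : ↥(G fseq S) := ⟨(f, c), hc⟩ with hp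
    set s : ↥S := ⟨c, hc.2.1⟩ with hs
    have hep : e p = s := Subtype.ext rfl
    have hpsym : e.symm s = p := by rw [← hep, ContinuousLinearEquiv.symm_apply_apply]
    have h1 : ‖p‖ ≤ C * ‖s‖ := by
      calc ‖p‖ = ‖(e.symm : ↥S →L[ℝ] ↥(G fseq S)) s‖ := by
            rw [ContinuousLinearEquiv.coe_coe, hpsym]
        _ ≤ ‖(e.symm : ↥S →L[ℝ] ↥(G fseq S))‖ * ‖s‖ := ContinuousLinearMap.le_opNorm _ _
        _ ≤ C * ‖s‖ := by
            apply mul_le_mul_of_nonneg_right _ (norm_nonneg s)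
            rw [hCdef]; linarith
    have h2 : ‖f‖ ≤ ‖p‖ := norm_fst_le ((f, c) : _ × _)
    have h3 : ‖s‖ = ‖c‖ := rfl
    calc ‖f‖ ≤ ‖p‖ := h2
      _ ≤ C * ‖s‖ := h1
      _ = C * ‖c‖ := by rw [h3]
  have hre : (fun n => ‖⟪f, fseq n⟫‖ ^ 2) = fun n => ‖(c : ∀ _ : ℕ, ℂ) n‖ ^ 2 :=
    funext fun n => by rw [hcoord n]
  constructor
  · rw [hre]; exact hsum
  · rw [show ∑' n, ‖⟪f, fseq n⟫‖ ^ 2 = ∑' n, ‖(c : ∀ _ : ℕ, ℂ) n‖ ^ 2 by rw [hre], hts,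
      inv_mul_le_iff₀ (by positivity)]
    nlinarith [norm_nonneg f, norm_nonneg c, hfp, hC0]
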